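/- Let c : (0,∞) → [0,∞) be a concave nondecreasing function, and let C > 0 and ρ ∈ (0,1). Then Σ_{k=1}^{∞} k^{−1/2} c(C ρ^k) < ∞ if and only if ∫_0^1 c(t) / ( t √(|log t|) ) dt < ∞, where |log t| = −log t for t ∈ (0,1). -/

import Mathlib

open MeasureTheory
section StmtAux
open Set

private lemma aux_rpow_half {x : ℝ} (hx : 0 ≤ x) : x ^ (-(1:ℝ)/2) = (Real.sqrt x)⁻¹ := by
  rw [show -(1:ℝ)/2 = -(1/2) by norm_num, Real.rpow_neg hx, Real.sqrt_eq_rpow]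

private lemma weight_deriv {x : ℝ} (hx0 : 0 < x) (hx1 : x < 1) :
    HasDerivAt (fun t => -2 * Real.sqrt (-Real.log t)) (1 / (x * Real.sqrt (-Real.log x))) x := by
  have hlx : 0 < -Real.log x := by have := Real.log_neg hx0 hx1; linarith
  have h1 : HasDerivAt (fun t : ℝ => -Real.log t) (-x⁻¹) x := (Real.hasDerivAt_log hx0.ne').neg
  have h2 : HasDerivAt Real.sqrt (1 / (2 * Real.sqrt (-Real.log x))) (-Real.log x) :=
    Real.hasDerivAt_sqrt hlx.ne'
  have h4 := (h2.comp x h1).const_mul (-2 : ℝ)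
  refine h4.congr_deriv ?_
  have hs : Real.sqrt (-Real.log x) ≠ 0 := (Real.sqrt_pos.2 hlx).ne'
  field_simp

private lemma weight_int {u v : ℝ} (hu : 0 < u) (huv : u ≤ v) (hv : v ≤ 1) :
    IntegrableOn (fun t => 1 / (t * Real.sqrt (-Real.log t))) (Set.Ioc u v) ∧
    ∫ t in Set.Ioc u v, 1 / (t * Real.sqrt (-Real.log t)) =
      2 * Real.sqrt (-Real.log u) - 2 * Real.sqrt (-Real.log v) := by
  have hcont : ContinuousOn (fun t => -2 * Real.sqrt (-Real.log t)) (Set.Icc u v) := by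
    apply ContinuousOn.mul continuousOn_const
    exact Real.continuous_sqrt.comp_continuousOn
      ((Real.continuousOn_log.mono (by
        intro x hx
        simp only [Set.mem_compl_iff, Set.mem_singleton_iff]
        exact (lt_of_lt_of_le hu hx.1).ne')).neg)
  have hderiv : ∀ x ∈ Set.Ioo u v, HasDerivAt (fun t => -2 * Real.sqrt (-Real.log t))
      (1 / (x * Real.sqrt (-Real.log x))) x :=
    fun x hx => weight_deriv (hu.trans hx.1) (lt_of_lt_of_le hx.2 hv)
  have hpos : ∀ x ∈ Set.Ioo u v, 0 ≤ 1 / (x * Real.sqrt (-Real.log x)) := by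
    intro x hx
    have hx0 : 0 < x := hu.trans hx.1
    positivity
  have hint : IntegrableOn (fun t => 1 / (t * Real.sqrt (-Real.log t))) (Set.Ioc u v) :=
    intervalIntegral.integrableOn_deriv_of_nonneg hcont hderiv hpos
  refine ⟨hint, ?_⟩
  have := intervalIntegral.integral_eq_sub_of_hasDeriv_right_of_le huv hcont
    (fun x hx => (hderiv x hx).hasDerivWithinAt)
    ((intervalIntegrable_iff_integrableOn_Ioc_of_le huv).2 hint)
  rw [intervalIntegral.integral_of_le huv] at this
  rw [this]; ring

private lemma sqrt_sub_le {a b : ℝ} (hb : 0 < b) (hba : b ≤ a) :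
    2 * Real.sqrt a - 2 * Real.sqrt b ≤ (a - b) / Real.sqrt b := by
  have hsb : 0 < Real.sqrt b := Real.sqrt_pos.2 hb
  have hsa : 0 ≤ Real.sqrt a := Real.sqrt_nonneg a
  have ha2 : Real.sqrt a ^ 2 = a := Real.sq_sqrt (hb.le.trans hba)
  have hb2 : Real.sqrt b ^ 2 = b := Real.sq_sqrt hb.le
  rw [le_div_iff₀ hsb]
  nlinarith [sq_nonneg (Real.sqrt a - Real.sqrt b)]

private lemma le_sqrt_sub {a b : ℝ} (hb : 0 ≤ b) (hba : b ≤ a) (ha : 0 < a) :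
    (a - b) / Real.sqrt a ≤ 2 * Real.sqrt a - 2 * Real.sqrt b := by
  have hsa : 0 < Real.sqrt a := Real.sqrt_pos.2 ha
  have hsb : 0 ≤ Real.sqrt b := Real.sqrt_nonneg b
  have ha2 : Real.sqrt a ^ 2 = a := Real.sq_sqrt ha.le
  have hb2 : Real.sqrt b ^ 2 = b := Real.sq_sqrt hb
  rw [div_le_iff₀ hsa]
  nlinarith [sq_nonneg (Real.sqrt a - Real.sqrt b)]

private lemma inv_sqrt_aux {x y A : ℝ} (hx : 0 < x) (hy : 0 < y) (h : y ≤ A * x) :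
    (Real.sqrt x)⁻¹ ≤ Real.sqrt A * (Real.sqrt y)⁻¹ := by
  have hA : 0 < A := by nlinarith
  have h1 : Real.sqrt y ≤ Real.sqrt A * Real.sqrt x := by
    rw [← Real.sqrt_mul hA.le]; exact Real.sqrt_le_sqrt h
  have hsx : 0 < Real.sqrt x := Real.sqrt_pos.2 hx
  have hsy : 0 < Real.sqrt y := Real.sqrt_pos.2 hy
  rw [inv_eq_one_div, ← div_eq_mul_inv, div_le_div_iff₀ hsx hsy]
  nlinarith

end StmtAux

set_option maxHeartbeats 1000000 in

/-- For a concave nondecreasing `c : (0,∞) → [0,∞)`, `C > 0` and `ρ ∈ (0,1)`,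
`∑_{k ≥ 1} k^{-1/2} c(C ρ^k) < ∞` iff `∫_0^1 c(t)/(t √|log t|) dt < ∞`. -/
theorem stmt_12 (c : ℝ → ℝ) (hc0 : ∀ t, 0 < t → 0 ≤ c t)
    (hcmono : MonotoneOn c (Set.Ioi 0)) (hcconc : ConcaveOn ℝ (Set.Ioi 0) c)
    (C ρ : ℝ) (hC : 0 < C) (hρ0 : 0 < ρ) (hρ1 : ρ < 1) :
    Summable (fun k : ℕ => ((k : ℝ) + 1) ^ (-(1 : ℝ) / 2) * c (C * ρ ^ (k + 1))) ↔
      IntegrableOn (fun t => c t / (t * Real.sqrt |Real.log t|)) (Set.Ioo 0 1) := by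
  clear hcconc
  set f : ℝ → ℝ := fun t => c t / (t * Real.sqrt |Real.log t|) with hfdef
  set w : ℝ → ℝ := fun t => 1 / (t * Real.sqrt (-Real.log t)) with hwdef
  obtain ⟨n₀, hn₀⟩ := exists_pow_lt_of_lt_one (show (0:ℝ) < 1/C by positivity) hρ1
  set N : ℕ := max n₀ 1 with hNdef
  have hN1 : 1 ≤ N := le_max_right _ _
  have hNR : (1:ℝ) ≤ (N:ℝ) := by exact_mod_cast hN1
  set D : ℝ := C * ρ ^ N with hDdef
  have hD0 : 0 < D := by positivity
  have hD1 : D < 1 := by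
    have h1 : ρ ^ N ≤ ρ ^ n₀ := pow_le_pow_of_le_one hρ0.le hρ1.le (le_max_left _ _)
    have h2 : C * (1/C) = 1 := by field_simp
    nlinarith
  set L : ℝ := -Real.log ρ with hLdef
  have hL : 0 < L := by have := Real.log_neg hρ0 hρ1; simp only [hLdef]; linarith
  set B : ℝ := -Real.log D with hBdef
  have hB : 0 < B := by have := Real.log_neg hD0 hD1; simp only [hBdef]; linarith
  set e : ℕ → ℝ := fun k => D * ρ ^ k with hedef
  have he0 : ∀ k, 0 < e k := fun k => by simp only [hedef]; positivity
  have heanti : ∀ i j : ℕ, i ≤ j → e j ≤ e i := by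
    intro i j hij
    have h1 : ρ ^ j ≤ ρ ^ i := pow_le_pow_of_le_one hρ0.le hρ1.le hij
    simp only [hedef]; nlinarith
  have he1 : ∀ k, e k < 1 := by
    intro k
    have h1 := heanti 0 k (Nat.zero_le k)
    have h2 : e 0 = D := by simp [hedef]
    linarith
  have heC : ∀ k, e k = C * ρ ^ (N + k) := by
    intro k; simp only [hedef, hDdef, pow_add]; ring
  have hestep : ∀ k, e (k+1) ≤ e k := fun k => heanti k (k+1) (Nat.le_succ k)
  have hloge : ∀ k : ℕ, -Real.log (e k) = B + (k:ℝ) * L := by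
    intro k
    simp only [hedef, hBdef, hLdef]
    rw [Real.log_mul hD0.ne' (by positivity), Real.log_pow]
    push_cast; ring
  have hW : ∀ k : ℕ, IntegrableOn w (Set.Ioc (e (k+1)) (e k)) ∧
      ∫ t in Set.Ioc (e (k+1)) (e k), w t
        = 2 * Real.sqrt (B + ((k:ℝ)+1) * L) - 2 * Real.sqrt (B + (k:ℝ) * L) := by
    intro k
    obtain ⟨h1, h2⟩ := weight_int (he0 (k+1)) (hestep k) (he1 k).le
    refine ⟨h1, ?_⟩
    rw [hwdef]
    rw [h2, hloge, hloge]; push_cast; ring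
  set m : ℝ := min B L with hmdef
  set M : ℝ := max B L with hMdef
  have hm : 0 < m := lt_min hB hL
  have hM : 0 < M := lt_of_lt_of_le hB (le_max_left _ _)
  set K1 : ℝ := L / Real.sqrt m with hK1def
  set K2 : ℝ := L / Real.sqrt (2*M) with hK2def
  have hK1 : 0 < K1 := div_pos hL (Real.sqrt_pos.2 hm)
  have hK2 : 0 < K2 := div_pos hL (Real.sqrt_pos.2 (by positivity))
  have hWub : ∀ k : ℕ, 2 * Real.sqrt (B + ((k:ℝ)+1) * L) - 2 * Real.sqrt (B + (k:ℝ) * L)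
      ≤ K1 * (Real.sqrt ((k:ℝ)+1))⁻¹ := by
    intro k
    have hk0 : (0:ℝ) ≤ (k:ℝ) := Nat.cast_nonneg k
    have h1 : (0:ℝ) < B + (k:ℝ) * L := by positivity
    have h2 : B + (k:ℝ) * L ≤ B + ((k:ℝ)+1) * L := by nlinarith
    have h3 := sqrt_sub_le h1 h2
    have h4 : B + ((k:ℝ)+1)*L - (B + (k:ℝ)*L) = L := by ring
    rw [h4] at h3
    refine h3.trans ?_
    have h5 : m * ((k:ℝ)+1) ≤ B + (k:ℝ)*L := by
      have hmB : m ≤ B := min_le_left _ _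
      have hmL : m ≤ L := min_le_right _ _
      nlinarith
    have h6 : Real.sqrt (m * ((k:ℝ)+1)) ≤ Real.sqrt (B + (k:ℝ)*L) := Real.sqrt_le_sqrt h5
    have h7 : (0:ℝ) < Real.sqrt (m * ((k:ℝ)+1)) := Real.sqrt_pos.2 (by positivity)
    have h8 : L / Real.sqrt (B + (k:ℝ)*L) ≤ L / Real.sqrt (m * ((k:ℝ)+1)) :=
      div_le_div_of_nonneg_left hL.le h7 h6
    refine h8.trans_eq ?_
    rw [Real.sqrt_mul hm.le, hK1def]
    have hsm : Real.sqrt m ≠ 0 := (Real.sqrt_pos.2 hm).ne'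
    have hsk : Real.sqrt ((k:ℝ)+1) ≠ 0 := (Real.sqrt_pos.2 (by positivity)).ne'
    field_simp
  have hWlb : ∀ k : ℕ, K2 * (Real.sqrt ((k:ℝ)+1))⁻¹
      ≤ 2 * Real.sqrt (B + ((k:ℝ)+1) * L) - 2 * Real.sqrt (B + (k:ℝ) * L) := by
    intro k
    have hk0 : (0:ℝ) ≤ (k:ℝ) := Nat.cast_nonneg k
    have ha : (0:ℝ) < B + ((k:ℝ)+1) * L := by positivity
    have h2 : B + (k:ℝ) * L ≤ B + ((k:ℝ)+1) * L := by nlinarith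
    have h3 := le_sqrt_sub (by positivity : (0:ℝ) ≤ B + (k:ℝ)*L) h2 ha
    have h4 : B + ((k:ℝ)+1)*L - (B + (k:ℝ)*L) = L := by ring
    rw [h4] at h3
    refine le_trans ?_ h3
    have h5 : B + ((k:ℝ)+1)*L ≤ (2*M) * ((k:ℝ)+1) := by
      have hBM : B ≤ M := le_max_left _ _
      have hLM : L ≤ M := le_max_right _ _
      nlinarith
    have h6 : Real.sqrt (B + ((k:ℝ)+1)*L) ≤ Real.sqrt ((2*M) * ((k:ℝ)+1)) := Real.sqrt_le_sqrt h5
    have h7 : (0:ℝ) < Real.sqrt (B + ((k:ℝ)+1)*L) := Real.sqrt_pos.2 ha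
    have h8 : L / Real.sqrt ((2*M) * ((k:ℝ)+1)) ≤ L / Real.sqrt (B + ((k:ℝ)+1)*L) :=
      div_le_div_of_nonneg_left hL.le h7 h6
    refine le_trans (le_of_eq ?_) h8
    rw [Real.sqrt_mul (by positivity : (0:ℝ) ≤ 2*M), hK2def]
    have hsm : Real.sqrt (2*M) ≠ 0 := (Real.sqrt_pos.2 (by positivity)).ne'
    have hsk : Real.sqrt ((k:ℝ)+1) ≠ 0 := (Real.sqrt_pos.2 (by positivity)).ne'
    field_simp
  have hfw : ∀ t : ℝ, 0 < t → t ≤ 1 → f t = c t * w t := by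
    intro t ht0 ht1
    have habs : |Real.log t| = -Real.log t := abs_of_nonpos (Real.log_nonpos ht0.le ht1)
    simp only [hfdef, hwdef, habs]
    rw [div_eq_mul_one_div]
  have hf0 : ∀ t : ℝ, 0 < t → 0 ≤ f t := by
    intro t ht
    exact div_nonneg (hc0 t ht) (by positivity)
  have hw0 : ∀ t : ℝ, 0 < t → 0 ≤ w t := by
    intro t ht
    have : 0 ≤ Real.sqrt (-Real.log t) := Real.sqrt_nonneg _
    simp only [hwdef]
    positivity
  have hgmono : Monotone (fun t => if 0 < t then c t else 0) := by
    intro x y hxy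
    by_cases hx : 0 < x
    · simp only [if_pos hx, if_pos (hx.trans_le hxy)]
      exact hcmono (Set.mem_Ioi.2 hx) (Set.mem_Ioi.2 (hx.trans_le hxy)) hxy
    · simp only [if_neg hx]
      by_cases hy : 0 < y
      · simp only [if_pos hy]; exact hc0 y hy
      · simp only [if_neg hy]; exact le_refl _
  have hf0meas : Measurable (fun t : ℝ => (if 0 < t then c t else 0) / (t * Real.sqrt |Real.log t|)) :=
    hgmono.measurable.div
      (measurable_id.mul (Real.continuous_sqrt.measurable.comp Real.measurable_log.abs))
  have hfaesm : ∀ S : Set ℝ, MeasurableSet S → S ⊆ Set.Ioi 0 →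
      AEStronglyMeasurable f (volume.restrict S) := by
    intro S hS hSsub
    refine (hf0meas.aestronglyMeasurable).congr ?_
    filter_upwards [ae_restrict_mem hS] with x hx
    have hx0 : 0 < x := hSsub hx
    simp only [hfdef, if_pos hx0]
  have hPiece : ∀ u v K : ℝ, 0 < u → u ≤ v → v ≤ 1 → 0 ≤ K → (∀ t ∈ Set.Ioc u v, c t ≤ K) →
      IntegrableOn f (Set.Ioc u v) := by
    intro u v K hu huv hv hK hbd
    obtain ⟨hwint, -⟩ := weight_int hu huv hv
    rw [← hwdef] at hwint
    have hsub : Set.Ioc u v ⊆ Set.Ioi 0 := fun x hx => Set.mem_Ioi.2 (hu.trans hx.1)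
    have haesm := hfaesm _ measurableSet_Ioc hsub
    have hKw : IntegrableOn (fun t => K * w t) (Set.Ioc u v) := hwint.const_mul K
    refine hKw.mono' haesm ?_
    filter_upwards [ae_restrict_mem measurableSet_Ioc] with t ht
    have ht0 : 0 < t := hu.trans ht.1
    rw [Real.norm_eq_abs, abs_of_nonneg (hf0 t ht0), hfw t ht0 (ht.2.trans hv)]
    exact mul_le_mul_of_nonneg_right (hbd t ht) (hw0 t ht0)
  have hcover : Set.Ioc (0:ℝ) (e 0) = ⋃ k, Set.Ioc (e (k+1)) (e k) := by
    ext x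
    simp only [Set.mem_Ioc, Set.mem_iUnion]
    constructor
    · rintro ⟨hx0, hxe⟩
      have hex : ∃ k, e k < x := by
        obtain ⟨k, hk⟩ := exists_pow_lt_of_lt_one (show (0:ℝ) < x / D by positivity) hρ1
        refine ⟨k, ?_⟩
        have := (lt_div_iff₀ hD0).1 hk
        simp only [hedef]; linarith
      have hspec : e (Nat.find hex) < x := Nat.find_spec hex
      have hn0 : Nat.find hex ≠ 0 := by
        intro h
        rw [h] at hspec
        exact absurd hxe (not_le.2 hspec)
      refine ⟨Nat.find hex - 1, ?_, ?_⟩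
      · rw [show Nat.find hex - 1 + 1 = Nat.find hex from by omega]; exact hspec
      · by_contra h
        exact Nat.find_min hex (show Nat.find hex - 1 < Nat.find hex from by omega) (not_le.1 h)
    · rintro ⟨k, hk1, hk2⟩
      exact ⟨(he0 (k+1)).trans hk1, hk2.trans (heanti 0 k (Nat.zero_le k))⟩
  have hdisj : Pairwise (Function.onFun Disjoint (fun k => Set.Ioc (e (k+1)) (e k))) := by
    have key : ∀ i j : ℕ, i < j → Disjoint (Set.Ioc (e (i+1)) (e i)) (Set.Ioc (e (j+1)) (e j)) := by
      intro i j hij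
      refine Set.disjoint_left.2 ?_
      rintro x ⟨hx1, hx2⟩ ⟨hx3, hx4⟩
      have h := heanti (i+1) j hij
      linarith
    intro i j hij
    rcases hij.lt_or_gt with h | h
    · exact key i j h
    · exact (key j i h).symm
  constructor
  · intro hsum
    have hb : Summable (fun k : ℕ => (Real.sqrt ((k:ℝ)+1))⁻¹ * c (e k)) := by
      have hmaj := ((summable_nat_add_iff (N-1)).2 hsum).mul_left (Real.sqrt N)
      refine Summable.of_nonneg_of_le (fun k => ?_) (fun k => ?_) hmaj
      · exact mul_nonneg (by positivity) (hc0 _ (he0 k))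
      · have harg : C * ρ ^ (k + (N-1) + 1) = e k := by
          rw [heC k, show N + k = k + (N-1) + 1 from by omega]
        have hcast : ((k + (N-1) : ℕ) : ℝ) + 1 = (k:ℝ) + N := by
          have h' : ((k + (N-1) + 1 : ℕ) : ℝ) = ((k + N : ℕ) : ℝ) := by
            rw [show k + (N-1) + 1 = k + N from by omega]
          push_cast at h' ⊢
          linarith
        rw [harg, hcast, aux_rpow_half (by positivity : (0:ℝ) ≤ (k:ℝ) + N)]
        have hineq : (Real.sqrt ((k:ℝ)+1))⁻¹ ≤ Real.sqrt N * (Real.sqrt ((k:ℝ)+N))⁻¹ := by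
          refine inv_sqrt_aux (by positivity) (by positivity) ?_
          have hk0 : (0:ℝ) ≤ (k:ℝ) := Nat.cast_nonneg k
          nlinarith
        calc (Real.sqrt ((k:ℝ)+1))⁻¹ * c (e k)
            ≤ (Real.sqrt N * (Real.sqrt ((k:ℝ)+N))⁻¹) * c (e k) :=
              mul_le_mul_of_nonneg_right hineq (hc0 _ (he0 k))
          _ = Real.sqrt N * ((Real.sqrt ((k:ℝ)+N))⁻¹ * c (e k)) := by ring
    have hfin : IntegrableOn f (Set.Ioc 0 (e 0)) := by
      refine ⟨hfaesm _ measurableSet_Ioc (fun x hx => Set.mem_Ioi.2 hx.1), ?_⟩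
      rw [hasFiniteIntegral_iff_norm]
      calc ∫⁻ t in Set.Ioc (0:ℝ) (e 0), ENNReal.ofReal ‖f t‖
          = ∑' k : ℕ, ∫⁻ t in Set.Ioc (e (k+1)) (e k), ENNReal.ofReal ‖f t‖ := by
            rw [hcover, lintegral_iUnion (fun k => measurableSet_Ioc) hdisj]
        _ ≤ ∑' k : ℕ, ENNReal.ofReal (K1 * ((Real.sqrt ((k:ℝ)+1))⁻¹ * c (e k))) := by
            refine ENNReal.tsum_le_tsum (fun k => ?_)
            obtain ⟨hwint, hwval⟩ := hW k
            have hcnn : 0 ≤ c (e k) := hc0 _ (he0 k)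
            calc ∫⁻ t in Set.Ioc (e (k+1)) (e k), ENNReal.ofReal ‖f t‖
                ≤ ∫⁻ t in Set.Ioc (e (k+1)) (e k), ENNReal.ofReal (c (e k) * w t) := by
                  refine lintegral_mono_ae ?_
                  filter_upwards [ae_restrict_mem measurableSet_Ioc] with t ht
                  refine ENNReal.ofReal_le_ofReal ?_
                  have ht0 : 0 < t := (he0 (k+1)).trans ht.1
                  rw [Real.norm_eq_abs, abs_of_nonneg (hf0 t ht0),
                    hfw t ht0 (ht.2.trans (he1 k).le)]
                  exact mul_le_mul_of_nonneg_right
                    (hcmono (Set.mem_Ioi.2 ht0) (Set.mem_Ioi.2 (he0 k)) ht.2) (hw0 t ht0)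
              _ = ENNReal.ofReal (∫ t in Set.Ioc (e (k+1)) (e k), c (e k) * w t) := by
                  refine (ofReal_integral_eq_lintegral_ofReal (hwint.const_mul _) ?_).symm
                  filter_upwards [ae_restrict_mem measurableSet_Ioc] with t ht
                  exact mul_nonneg hcnn (hw0 t ((he0 (k+1)).trans ht.1))
              _ = ENNReal.ofReal (c (e k) *
                    (2 * Real.sqrt (B + ((k:ℝ)+1) * L) - 2 * Real.sqrt (B + (k:ℝ) * L))) := by
                  rw [integral_const_mul, hwval]
              _ ≤ ENNReal.ofReal (K1 * ((Real.sqrt ((k:ℝ)+1))⁻¹ * c (e k))) := by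
                  refine ENNReal.ofReal_le_ofReal ?_
                  calc c (e k) * (2 * Real.sqrt (B + ((k:ℝ)+1) * L) - 2 * Real.sqrt (B + (k:ℝ) * L))
                      ≤ c (e k) * (K1 * (Real.sqrt ((k:ℝ)+1))⁻¹) :=
                        mul_le_mul_of_nonneg_left (hWub k) hcnn
                    _ = K1 * ((Real.sqrt ((k:ℝ)+1))⁻¹ * c (e k)) := by ring
        _ = ENNReal.ofReal (∑' k : ℕ, K1 * ((Real.sqrt ((k:ℝ)+1))⁻¹ * c (e k))) := by
            refine (ENNReal.ofReal_tsum_of_nonneg (fun k => ?_) (hb.mul_left K1)).symm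
            exact mul_nonneg hK1.le (mul_nonneg (by positivity) (hc0 _ (he0 k)))
        _ < ⊤ := ENNReal.ofReal_lt_top
    have h2 : IntegrableOn f (Set.Ioc (e 0) 1) :=
      hPiece (e 0) 1 (c 1) (he0 0) (he1 0).le le_rfl (hc0 1 one_pos)
        (fun t ht => hcmono (Set.mem_Ioi.2 ((he0 0).trans ht.1)) (Set.mem_Ioi.2 one_pos) ht.2)
    refine (hfin.union h2).mono_set ?_
    rintro x ⟨hx0, hx1⟩
    by_cases h : x ≤ e 0
    · exact Or.inl ⟨hx0, h⟩
    · exact Or.inr ⟨not_le.1 h, hx1.le⟩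
  · intro hint
    have hsubIk : ∀ k, Set.Ioc (e (k+1)) (e k) ⊆ Set.Ioo (0:ℝ) 1 :=
      fun k x hx => ⟨(he0 (k+1)).trans hx.1, lt_of_le_of_lt hx.2 (he1 k)⟩
    have hintU : IntegrableOn f (⋃ k, Set.Ioc (e (k+1)) (e k)) :=
      hint.mono_set (Set.iUnion_subset hsubIk)
    have hSum0 : Summable (fun k => ∫ t in Set.Ioc (e (k+1)) (e k), f t) :=
      (hasSum_integral_iUnion (fun k => measurableSet_Ioc) hdisj hintU).summable
    have hlow : ∀ k : ℕ, K2 * ((Real.sqrt ((k:ℝ)+1))⁻¹ * c (e (k+1)))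
        ≤ ∫ t in Set.Ioc (e (k+1)) (e k), f t := by
      intro k
      obtain ⟨hwint, hwval⟩ := hW k
      have hcnn : 0 ≤ c (e (k+1)) := hc0 _ (he0 (k+1))
      have hfint : IntegrableOn f (Set.Ioc (e (k+1)) (e k)) := hint.mono_set (hsubIk k)
      have hle : ∀ t ∈ Set.Ioc (e (k+1)) (e k), c (e (k+1)) * w t ≤ f t := by
        intro t ht
        have ht0 : 0 < t := (he0 (k+1)).trans ht.1
        rw [hfw t ht0 (ht.2.trans (he1 k).le)]
        exact mul_le_mul_of_nonneg_right
          (hcmono (Set.mem_Ioi.2 (he0 (k+1))) (Set.mem_Ioi.2 ht0) ht.1.le) (hw0 t ht0)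
      calc K2 * ((Real.sqrt ((k:ℝ)+1))⁻¹ * c (e (k+1)))
          = c (e (k+1)) * (K2 * (Real.sqrt ((k:ℝ)+1))⁻¹) := by ring
        _ ≤ c (e (k+1)) *
            (2 * Real.sqrt (B + ((k:ℝ)+1) * L) - 2 * Real.sqrt (B + (k:ℝ) * L)) :=
            mul_le_mul_of_nonneg_left (hWlb k) hcnn
        _ = ∫ t in Set.Ioc (e (k+1)) (e k), c (e (k+1)) * w t := by
            rw [integral_const_mul, hwval]
        _ ≤ ∫ t in Set.Ioc (e (k+1)) (e k), f t :=
            setIntegral_mono_on (hwint.const_mul _) hfint measurableSet_Ioc hle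
    have hbp : Summable (fun k : ℕ => K2 * ((Real.sqrt ((k:ℝ)+1))⁻¹ * c (e (k+1)))) :=
      Summable.of_nonneg_of_le
        (fun k => mul_nonneg hK2.le (mul_nonneg (by positivity) (hc0 _ (he0 (k+1)))))
        hlow hSum0
    have hbp2 : Summable (fun k : ℕ => (Real.sqrt ((k:ℝ)+1))⁻¹ * c (e (k+1))) :=
      (summable_mul_left_iff hK2.ne').1 hbp
    rw [← summable_nat_add_iff N]
    refine Summable.of_nonneg_of_le (fun k => ?_) (fun k => ?_) hbp2
    · exact mul_nonneg (Real.rpow_nonneg (by positivity) _) (hc0 _ (by positivity))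
    · have harg : C * ρ ^ (k + N + 1) = e (k+1) := by
        rw [heC (k+1), show N + (k+1) = k + N + 1 from by omega]
      have hcast : ((k + N : ℕ) : ℝ) + 1 = ((k:ℝ) + N) + 1 := by push_cast; ring
      rw [harg, hcast, aux_rpow_half (by positivity : (0:ℝ) ≤ (k:ℝ) + N + 1)]
      refine mul_le_mul_of_nonneg_right ?_ (hc0 _ (he0 (k+1)))
      refine inv_anti₀ (Real.sqrt_pos.2 (by positivity)) ?_
      refine Real.sqrt_le_sqrt ?_
      have : (0:ℝ) ≤ (N:ℝ) := Nat.cast_nonneg N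
      linarith
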